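/- Under the hypotheses of the preceding contraction lemma, for each 0 < h ≤ h₀ there exists a unique ψ(·,h) ∈ X = {u ∈ H^s(M) : ‖u - u_f‖_{H^s} ≤ δ} solving div(∇ψ + h χ |∇ψ|² ∇ψ) = 0 in M with ψ = f on ∂M; moreover ψ = u_f - h Δ_D^{-1}(div(χ |∇u_f|² ∇u_f)) + O_{H^s}(h²). -/

import Mathlib

set_option maxHeartbeats 1000000


/-- Existence, uniqueness and first-order expansion of the strong electric field potential.
In the abstract setting of the contraction lemma (`Hs = H^s(M)`,
`B(φ₁,φ₂,φ₃) = Δ_D⁻¹ div(χ⟨∇φ₁,∇φ₂⟩∇φ₃)`), fixed points of `T_h(u) = u_f - h B(u,u,u)`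
are exactly the solutions `ψ` of `div(∇ψ + hχ|∇ψ|²∇ψ) = 0`, `ψ|_∂M = f`.  For each
`0 < h ≤ h₀` there is a unique fixed point in `X = {u : ‖u - u_f‖ ≤ δ}`, and it satisfies
`ψ = u_f - h B(u_f,u_f,u_f) + O_{H^s}(h²)`. -/
theorem stmt5 {Hs : Type*} [NormedAddCommGroup Hs] [NormedSpace ℝ Hs] [CompleteSpace Hs]
    (B : Hs →ₗ[ℝ] Hs →ₗ[ℝ] Hs →ₗ[ℝ] Hs) (C₁ : ℝ)
    (hB : ∀ φ₁ φ₂ φ₃ : Hs, ‖B φ₁ φ₂ φ₃‖ ≤ C₁ * ‖φ₁‖ * ‖φ₂‖ * ‖φ₃‖)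
    (u_f : Hs) (δ : ℝ) (hδ : 0 < δ)
    (X : Set Hs) (hX : X = {u : Hs | ‖u - u_f‖ ≤ δ}) :
    ∃ h₀ > 0, ∃ C : ℝ, ∀ h : ℝ, 0 < h → h ≤ h₀ →
      (∃! ψ : Hs, ψ ∈ X ∧ ψ = u_f - h • B ψ ψ ψ) ∧
      (∀ ψ : Hs, ψ ∈ X → ψ = u_f - h • B ψ ψ ψ →
        ‖ψ - (u_f - h • B u_f u_f u_f)‖ ≤ C * h ^ 2) := by
  -- replace C₁ by a nonnegative constant
  set K : ℝ := max C₁ 0 with hKdef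
  have hK0 : (0:ℝ) ≤ K := le_max_right _ _
  have hK : ∀ φ₁ φ₂ φ₃ : Hs, ‖B φ₁ φ₂ φ₃‖ ≤ K * ‖φ₁‖ * ‖φ₂‖ * ‖φ₃‖ := by
    intro a b c
    refine (hB a b c).trans ?_
    have h1 : C₁ ≤ K := le_max_left _ _
    nlinarith [norm_nonneg a, norm_nonneg b, norm_nonneg c,
      mul_nonneg (mul_nonneg (norm_nonneg a) (norm_nonneg b)) (norm_nonneg c)]
  set R : ℝ := ‖u_f‖ + δ with hRdef
  have hR : 0 < R := by positivity
  set L : ℝ := 3 * K * R ^ 2 with hLdef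
  have hL0 : 0 ≤ L := by positivity
  -- bound on cubic term
  have hcube : ∀ u : Hs, ‖u‖ ≤ R → ‖B u u u‖ ≤ K * R ^ 3 := by
    intro u hu
    calc ‖B u u u‖ ≤ K * ‖u‖ * ‖u‖ * ‖u‖ := hK u u u
      _ ≤ K * R * R * R := by gcongr <;> positivity
      _ = K * R ^ 3 := by ring
  -- trilinear difference bound
  have hdiff : ∀ u v : Hs, ‖u‖ ≤ R → ‖v‖ ≤ R →
      ‖B u u u - B v v v‖ ≤ L * ‖u - v‖ := by
    intro u v hu hv
    have key : B u u u - B v v v = B (u - v) u u + B v (u - v) u + B v v (u - v) := by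
      simp only [map_sub, LinearMap.sub_apply]
      abel
    rw [key]
    have b1 : ‖B (u - v) u u‖ ≤ K * R ^ 2 * ‖u - v‖ := by
      calc ‖B (u - v) u u‖ ≤ K * ‖u - v‖ * ‖u‖ * ‖u‖ := hK _ _ _
        _ ≤ K * ‖u - v‖ * R * R := by gcongr <;> positivity
        _ = K * R ^ 2 * ‖u - v‖ := by ring
    have b2 : ‖B v (u - v) u‖ ≤ K * R ^ 2 * ‖u - v‖ := by
      calc ‖B v (u - v) u‖ ≤ K * ‖v‖ * ‖u - v‖ * ‖u‖ := hK _ _ _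
        _ ≤ K * R * ‖u - v‖ * R := by gcongr <;> positivity
        _ = K * R ^ 2 * ‖u - v‖ := by ring
    have b3 : ‖B v v (u - v)‖ ≤ K * R ^ 2 * ‖u - v‖ := by
      calc ‖B v v (u - v)‖ ≤ K * ‖v‖ * ‖v‖ * ‖u - v‖ := hK _ _ _
        _ ≤ K * R * R * ‖u - v‖ := by gcongr <;> positivity
        _ = K * R ^ 2 * ‖u - v‖ := by ring
    calc ‖B (u - v) u u + B v (u - v) u + B v v (u - v)‖
        ≤ ‖B (u - v) u u‖ + ‖B v (u - v) u‖ + ‖B v v (u - v)‖ := norm_add₃_le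
      _ ≤ L * ‖u - v‖ := by rw [hLdef]; linarith
  -- membership to norm bound
  have hmemR : ∀ u : Hs, u ∈ X → ‖u‖ ≤ R := by
    intro u hu
    rw [hX] at hu
    calc ‖u‖ = ‖(u - u_f) + u_f‖ := by rw [sub_add_cancel]
      _ ≤ ‖u - u_f‖ + ‖u_f‖ := norm_add_le _ _
      _ ≤ δ + ‖u_f‖ := add_le_add_left hu _
      _ = R := by rw [hRdef]; ring
  have hXclosed : IsClosed X := by
    have : X = Metric.closedBall u_f δ := by
      rw [hX]; ext u; simp [Metric.mem_closedBall, dist_eq_norm]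
    rw [this]; exact Metric.isClosed_closedBall
  have hufX : u_f ∈ X := by rw [hX]; simp [hδ.le]
  refine ⟨min (δ / (K * R ^ 3 + 1)) (1 / (2 * L + 1)), by positivity,
    L * (K * R ^ 3), ?_⟩
  intro h hh0 hh1
  have hpos : (0:ℝ) < K * R ^ 3 + 1 := by positivity
  have hhδ : h * (K * R ^ 3) ≤ δ := by
    have h1 : h ≤ δ / (K * R ^ 3 + 1) := le_trans hh1 (min_le_left _ _)
    have h2 : h * (K * R ^ 3 + 1) ≤ δ := (le_div_iff₀ hpos).mp h1
    nlinarith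
  have hhL : h * L ≤ 1 / 2 := by
    have h1 : h ≤ 1 / (2 * L + 1) := le_trans hh1 (min_le_right _ _)
    have h2 : (0:ℝ) < 2 * L + 1 := by positivity
    rw [le_div_iff₀ h2] at h1
    nlinarith
  -- the map stays in X
  have hmap : ∀ u : Hs, u ∈ X → u_f - h • B u u u ∈ X := by
    intro u hu
    rw [hX]
    have hu' := hcube u (hmemR u hu)
    have e : ‖u_f - h • B u u u - u_f‖ = h * ‖B u u u‖ := by
      rw [show u_f - h • B u u u - u_f = -(h • B u u u) by abel, norm_neg,
        norm_smul, Real.norm_eq_abs, abs_of_pos hh0]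
    simp only [Set.mem_setOf_eq, e]
    nlinarith [norm_nonneg (B u u u)]
  -- contraction estimate
  have hcontr : ∀ u v : Hs, u ∈ X → v ∈ X →
      ‖(u_f - h • B u u u) - (u_f - h • B v v v)‖ ≤ (1 / 2) * ‖u - v‖ := by
    intro u v hu hv
    have hdd := hdiff u v (hmemR u hu) (hmemR v hv)
    have e : (u_f - h • B u u u) - (u_f - h • B v v v) = h • (B v v v - B u u u) := by
      rw [smul_sub]; abel
    rw [e, norm_smul, Real.norm_eq_abs, abs_of_pos hh0, norm_sub_rev]
    nlinarith [norm_nonneg (u - v), norm_nonneg (B u u u - B v v v)]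
  -- fixed point via Banach
  haveI : Nonempty X := ⟨⟨u_f, hufX⟩⟩
  haveI : CompleteSpace X := hXclosed.completeSpace_coe
  obtain ⟨ψ₀, hψ₀X, hfixv⟩ : ∃ ψ₀ : Hs, ψ₀ ∈ X ∧ ψ₀ = u_f - h • B ψ₀ ψ₀ ψ₀ := by
    let f : X → X := fun u => ⟨u_f - h • B u u u, hmap u u.2⟩
    have hcw : ContractingWith (1/2 : NNReal) f := by
      refine ⟨by rw [← NNReal.coe_lt_coe]; norm_num, LipschitzWith.of_dist_le_mul fun x y => ?_⟩
      have hc := hcontr x y x.2 y.2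
      rw [Subtype.dist_eq, Subtype.dist_eq, dist_eq_norm, dist_eq_norm]
      have e2 : ((1/2 : NNReal) : ℝ) = 1/2 := by norm_num
      rw [e2]
      exact hc
    let p : X := ContractingWith.fixedPoint f hcw
    refine ⟨(p : Hs), p.2, ?_⟩
    have hfix : f p = p := hcw.fixedPoint_isFixedPt
    exact congrArg Subtype.val hfix.symm
  -- uniqueness helper
  have huniq : ∀ y : Hs, y ∈ X ∧ y = u_f - h • B y y y → y = ψ₀ := by
    rintro y ⟨hyX, hyfix⟩
    have key : ‖y - ψ₀‖ ≤ (1/2) * ‖y - ψ₀‖ := by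
      calc ‖y - ψ₀‖
          = ‖(u_f - h • B y y y) - (u_f - h • B ψ₀ ψ₀ ψ₀)‖ := by
            rw [← hyfix, ← hfixv]
        _ ≤ (1/2) * ‖y - ψ₀‖ := hcontr y ψ₀ hyX hψ₀X
    have h0 : ‖y - ψ₀‖ ≤ 0 := by linarith
    have h00 := le_antisymm h0 (norm_nonneg _)
    rw [norm_eq_zero, sub_eq_zero] at h00
    exact h00
  constructor
  · exact ⟨ψ₀, ⟨hψ₀X, hfixv⟩, huniq⟩
  · intro ψ hψX hψfix
    have hψR := hmemR ψ hψX
    have e : ψ - (u_f - h • B u_f u_f u_f) = h • (B u_f u_f u_f - B ψ ψ ψ) := by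
      rw [smul_sub]; nth_rewrite 1 [hψfix]; abel
    rw [e, norm_smul, Real.norm_eq_abs, abs_of_pos hh0, norm_sub_rev]
    have hufR : ‖u_f‖ ≤ R := by rw [hRdef]; linarith
    have hd := hdiff ψ u_f hψR hufR
    have hψuf : ‖ψ - u_f‖ ≤ h * (K * R ^ 3) := by
      have e2 : ψ - u_f = -(h • B ψ ψ ψ) := by nth_rewrite 1 [hψfix]; abel
      rw [e2, norm_neg, norm_smul, Real.norm_eq_abs, abs_of_pos hh0]
      have := hcube ψ hψR
      nlinarith [norm_nonneg (B ψ ψ ψ)]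
    calc h * ‖B ψ ψ ψ - B u_f u_f u_f‖
        ≤ h * (L * ‖ψ - u_f‖) := by nlinarith [norm_nonneg (ψ - u_f)]
      _ ≤ h * (L * (h * (K * R ^ 3))) := by gcongr
      _ = L * (K * R ^ 3) * h ^ 2 := by ring
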